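/- Let K be a field of characteristic p and L = K(α_1, ..., α_n) with each α_i^p - α_i = f_i ∈ K, such that [L:K] = p^n (i.e., {α_1,...,α_n} is an AS-basis). If γ ∈ L satisfies γ^p - γ ∈ K, then γ = a_1 α_1 + ... + a_n α_n + x for some a_1, ..., a_n ∈ F_p and x ∈ K. -/

import Mathlib

open Polynomial

lemma AS_prod (p : ℕ) [Fact p.Prime] (L : Type*) [Field L] [CharP L p] :
    (X ^ p - X : L[X]) = ∏ a : ZMod p, (X - C ((ZMod.castHom dvd_rfl L) a)) := by
  have hp : 1 < p := (Fact.out : p.Prime).one_lt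
  have hcard : Fintype.card (ZMod p) = p := ZMod.card p
  have hmonic : ((X : (ZMod p)[X]) ^ p - X).Monic := by
    apply monic_X_pow_sub
    rw [degree_X]
    exact_mod_cast hp
  have hroots : ((X : (ZMod p)[X]) ^ p - X).roots = Finset.univ.val := by
    have := FiniteField.roots_X_pow_card_sub_X (ZMod p)
    rwa [hcard] at this
  have hdeg : ((X : (ZMod p)[X]) ^ p - X).natDegree = p :=
    FiniteField.X_pow_card_sub_X_natDegree_eq _ hp
  have key : ((X : (ZMod p)[X]) ^ p - X) = ∏ a : ZMod p, (X - C a) := by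
    have h2 := prod_multiset_X_sub_C_of_monic_of_roots_card_eq hmonic
      (by rw [hroots, hdeg]; simpa using hcard)
    rw [← h2, hroots, Finset.prod_eq_multiset_prod]
  have := congrArg (Polynomial.map (ZMod.castHom dvd_rfl L)) key
  simpa [Polynomial.map_sub, Polynomial.map_pow, Polynomial.map_prod] using this

lemma AS_exists_zmod (p : ℕ) [Fact p.Prime] {L : Type*} [Field L] [CharP L p]
    {d : L} (hd : d ^ p = d) : ∃ a : ZMod p, (ZMod.castHom dvd_rfl L) a = d := by
  have := congrArg (Polynomial.eval d) (AS_prod p L)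
  simp only [eval_sub, eval_pow, eval_X, eval_prod, eval_C] at this
  rw [hd, sub_self] at this
  obtain ⟨a, -, ha⟩ := Finset.prod_eq_zero_iff.mp this.symm
  exact ⟨a, (sub_eq_zero.mp ha).symm⟩

lemma AS_prod' (p : ℕ) [Fact p.Prime] {L : Type*} [Field L] [CharP L p] (β : L) :
    (X ^ p - X : L[X]) - C (β ^ p - β)
      = ∏ a : ZMod p, (X - C (β + (ZMod.castHom dvd_rfl L) a)) := by
  have := congrArg (fun q : L[X] => q.comp (X - C β)) (AS_prod p L)
  simp only [sub_comp, pow_comp, X_comp, prod_comp, C_comp] at this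
  have hc : ((X : L[X]) - C β) ^ p = X ^ p - C (β ^ p) := by
    rw [sub_pow_char, ← C_pow]
  rw [hc] at this
  rw [show (X:L[X]) ^ p - X - C (β ^ p - β) = X ^ p - C (β ^ p) - (X - C β) by rw [C_sub]; ring, this]
  refine Finset.prod_congr rfl fun a _ => ?_
  rw [C_add]
  ring

lemma AS_monic (p : ℕ) [Fact p.Prime] {K : Type*} [Field K] (c : K) :
    ((X : K[X]) ^ p - X - C c).Monic := by
  have hp : 1 < p := (Fact.out : p.Prime).one_lt
  rw [sub_sub]
  apply monic_X_pow_sub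
  refine lt_of_le_of_lt (degree_add_le _ _) ?_
  simp only [degree_X, degree_C_le]
  rw [max_lt_iff]
  constructor
  · exact_mod_cast hp
  · exact lt_of_le_of_lt degree_C_le (by exact_mod_cast Nat.zero_lt_of_lt hp)

theorem stmt2 (p : ℕ) [Fact p.Prime] {K L : Type*} [Field K] [Field L]
    [Algebra K L] [CharP K p] (n : ℕ) (α : Fin n → L) (f : Fin n → K)
    (hAS : ∀ i, α i ^ p - α i = algebraMap K L (f i))
    (hgen : Algebra.adjoin K (Set.range α) = ⊤)
    (hdeg : Module.finrank K L = p ^ n)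
    (γ : L) (hγ : γ ^ p - γ ∈ (algebraMap K L).range) :
    ∃ (a : Fin n → ZMod p) (x : K),
      γ = (∑ i, (a i).val • α i) + algebraMap K L x := by
  classical
  have hp : p.Prime := Fact.out
  haveI : CharP L p := charP_of_injective_algebraMap (algebraMap K L).injective p
  set e : ZMod p →+* L := ZMod.castHom dvd_rfl L with he
  haveI : FiniteDimensional K L :=
    FiniteDimensional.of_finrank_pos (by rw [hdeg]; exact pow_pos hp.pos n)
  -- the splitting polynomial
  set T : Finset K := Finset.image f Finset.univ with hT
  set g : K[X] := ∏ c ∈ T, (X ^ p - X - C c) with hg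
  have hsplit_factor : ∀ i, ((X ^ p - X - C (f i) : K[X]).map (algebraMap K L)).Splits := by
    intro i
    have hmap : ((X ^ p - X - C (f i) : K[X]).map (algebraMap K L))
        = (X ^ p - X : L[X]) - C ((α i) ^ p - α i) := by
      rw [hAS i]
      simp [Polynomial.map_sub, Polynomial.map_pow]
    rw [hmap, AS_prod' p]
    exact Splits.prod fun a _ => Splits.X_sub_C _
  have hsep : g.Separable := by
    apply separable_prod'
    · intro a ha b hb hab
      refine ⟨C (b - a)⁻¹, -C (b - a)⁻¹, ?_⟩
      rw [neg_mul, ← sub_eq_add_neg, ← mul_sub]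
      have : (X ^ p - X - C a : K[X]) - (X ^ p - X - C b) = C (b - a) := by
        rw [C_sub]; ring
      rw [this, ← C_mul, inv_mul_cancel₀ (sub_ne_zero.mpr (fun h => hab h.symm)), C_1]
    · intro c _
      rw [Polynomial.separable_def]
      have hder : derivative ((X : K[X]) ^ p - X - C c) = -1 := by
        simp only [derivative_sub, derivative_X_pow, derivative_X, derivative_C, sub_zero]
        rw [CharP.cast_eq_zero K p]
        simp
      rw [hder]
      exact (isCoprime_one_right).neg_right
  haveI hSF : IsSplittingField K L g := by
    constructor
    · rw [Polynomial.map_prod]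
      exact Splits.prod (by
        rintro c hc
        obtain ⟨i, -, rfl⟩ := Finset.mem_image.mp hc
        exact hsplit_factor i)
    · rw [eq_top_iff, ← hgen]
      apply Algebra.adjoin_mono
      rintro - ⟨i, rfl⟩
      rw [mem_rootSet]
      constructor
      · apply Finset.prod_ne_zero_iff.mpr
        intro c _
        exact (AS_monic p c).ne_zero
      · rw [map_prod]
        apply Finset.prod_eq_zero (Finset.mem_image_of_mem f (Finset.mem_univ i))
        simp [hAS i]
  haveI hGal : IsGalois K L := IsGalois.of_separable_splitting_field hsep
  haveI : NeZero p := ⟨hp.ne_zero⟩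
  have cardG : Fintype.card (L ≃ₐ[K] L) = p ^ n := by
    rw [← Nat.card_eq_fintype_card, IsGalois.card_aut_eq_finrank, hdeg]
  have heα : ∀ (σ : L ≃ₐ[K] L) (y : L), y ^ p - y ∈ (algebraMap K L).range →
      (σ y - y) ^ p = σ y - y := by
    rintro σ y ⟨x, hx⟩
    have h1 : (σ y - y) ^ p = σ y ^ p - y ^ p := sub_pow_char _ _
    have h2 : y ^ p = y + algebraMap K L x := by rw [hx]; ring
    have h3 : σ y ^ p = σ y + algebraMap K L x := by
      rw [← map_pow, h2, map_add, AlgEquiv.commutes]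
    rw [h1, h2, h3]; ring
  choose cf hcf using fun (σ : L ≃ₐ[K] L) (i : Fin n) =>
    AS_exists_zmod p (heα σ (α i) ⟨f i, (hAS i).symm⟩)
  have hσe : ∀ (σ : L ≃ₐ[K] L) (a : ZMod p), σ (e a) = e a := by
    intro σ a
    exact DFunLike.congr_fun (RingHom.ext_zmod ((σ : L →+* L).comp e) e) a
  have hcf_inj : Function.Injective cf := by
    intro σ τ h
    have hαeq : ∀ i, σ (α i) = τ (α i) := by
      intro i
      have h1 := hcf σ i
      have h2 := hcf τ i
      rw [h] at h1
      exact sub_left_inj.mp (h1.symm.trans h2)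
    have hcoe : (σ : L →ₐ[K] L) = (τ : L →ₐ[K] L) := by
      have hle : Algebra.adjoin K (Set.range α)
          ≤ AlgHom.equalizer (σ : L →ₐ[K] L) (τ : L →ₐ[K] L) :=
        Algebra.adjoin_le (by rintro - ⟨i, rfl⟩; exact hαeq i)
      rw [hgen, top_le_iff] at hle
      exact AlgHom.ext fun x => (AlgHom.mem_equalizer _ _ x).mp (hle ▸ Algebra.mem_top)
    exact AlgEquiv.coe_algHom_injective hcoe
  have hZcard : Fintype.card (Fin n → ZMod p) = p ^ n := by
    rw [Fintype.card_fun, ZMod.card, Fintype.card_fin]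
  have hbij : Function.Bijective cf :=
    (Fintype.bijective_iff_injective_and_card cf).mpr ⟨hcf_inj, by rw [cardG, hZcard]⟩
  have hcf_mul : ∀ σ τ : L ≃ₐ[K] L, cf (σ * τ) = cf σ + cf τ := by
    intro σ τ
    funext i
    apply e.injective
    rw [Pi.add_apply, map_add, hcf, hcf, hcf]
    show (σ * τ) (α i) - α i = _
    rw [AlgEquiv.mul_apply]
    have hτ : τ (α i) = α i + e (cf τ i) := by rw [hcf τ i]; ring
    rw [hτ, map_add, hσe]
    ring
  choose χ hχ using fun σ : L ≃ₐ[K] L => AS_exists_zmod p (heα σ γ hγ)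
  have hχ_mul : ∀ σ τ : L ≃ₐ[K] L, χ (σ * τ) = χ σ + χ τ := by
    intro σ τ
    apply e.injective
    rw [map_add, hχ, hχ, hχ]
    rw [AlgEquiv.mul_apply]
    have hτ : τ γ = γ + e (χ τ) := by rw [hχ τ]; ring
    rw [hτ, map_add, hσe]
    ring
  set E : (L ≃ₐ[K] L) ≃ (Fin n → ZMod p) := Equiv.ofBijective cf hbij with hE
  have hEapp : ∀ σ, E σ = cf σ := fun _ => rfl
  have hEsymm_add : ∀ v w, E.symm (v + w) = E.symm v * E.symm w := by
    intro v w
    apply E.injective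
    rw [Equiv.apply_symm_apply, hEapp, hcf_mul]
    rw [← hEapp, ← hEapp, Equiv.apply_symm_apply, Equiv.apply_symm_apply]
  set a : Fin n → ZMod p := fun i => χ (E.symm (Pi.single i 1)) with ha
  let Φ : (Fin n → ZMod p) →+ ZMod p :=
    AddMonoidHom.mk' (fun v => χ (E.symm v)) (fun v w => by beta_reduce; rw [hEsymm_add, hχ_mul])
  have hψ : ∀ σ : L ≃ₐ[K] L, χ σ = ∑ i, a i * cf σ i := by
    intro σ
    calc χ σ = Φ (cf σ) := by
            show χ σ = χ (E.symm (cf σ))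
            rw [← hEapp, Equiv.symm_apply_apply]
      _ = Φ (∑ i, Pi.single i (cf σ i)) := by rw [Finset.univ_sum_single]
      _ = ∑ i, Φ (Pi.single i (cf σ i)) := map_sum _ _ _
      _ = ∑ i, a i * cf σ i := by
            refine Finset.sum_congr rfl fun i _ => ?_
            have h1 : Pi.single i (cf σ i) = (cf σ i).val • Pi.single (M := fun _ => ZMod p) i (1 : ZMod p) := by
              rw [← Pi.single_smul, nsmul_eq_mul, mul_one, ZMod.natCast_zmod_val]
            rw [h1, map_nsmul, nsmul_eq_mul, ZMod.natCast_zmod_val]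
            exact mul_comm _ _
  set γ' := γ - ∑ i, (a i).val • α i with hγ'
  have hfixall : ∀ σ : L ≃ₐ[K] L, σ γ' = γ' := by
    intro σ
    have hσγ : σ γ = γ + e (χ σ) := by rw [hχ σ]; ring
    have hσα : ∀ i, σ (α i) = α i + e (cf σ i) := fun i => by rw [hcf σ i]; ring
    have hkey : e (χ σ) = ∑ i, (a i).val • e (cf σ i) := by
      rw [hψ σ, map_sum]
      refine Finset.sum_congr rfl fun i _ => ?_
      rw [map_mul, nsmul_eq_mul]
      congr 1
      rw [he, ZMod.castHom_apply, ← ZMod.natCast_val]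
    rw [hγ', map_sub, map_sum]
    simp_rw [map_nsmul, hσα, smul_add, Finset.sum_add_distrib, hσγ, hkey]
    ring
  have hmem : γ' ∈ IntermediateField.fixedField (⊤ : Subgroup (L ≃ₐ[K] L)) :=
    fun σ => hfixall σ.1
  have hff : IntermediateField.fixedField (⊤ : Subgroup (L ≃ₐ[K] L)) = ⊥ := by
    rw [← IntermediateField.fixingSubgroup_bot (F := K) (E := L),
      IsGalois.fixedField_fixingSubgroup (⊥ : IntermediateField K L)]
  rw [hff, IntermediateField.mem_bot] at hmem
  obtain ⟨x, hx⟩ := hmem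
  refine ⟨a, x, ?_⟩
  rw [hx, hγ']
  ring
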